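/- PALM linear rate: under the PALM setting with f ∈ F^{1,1}_L globally and partial Lipschitz constants Lⱼ, if φ satisfies ‖g‖ ≥ η·√(φ(x) − min φ) for some subgradient bound (res-obj-EB with operator ∂⁰φ, constant η, on Ω containing all iterates), then φ(x^{(t+1)}) − min φ ≤ (η²L_min/(4pL² + 4L_max²) + 1)^{-1}·(φ(x^{(t)}) − min φ) for all t ≥ 0. -/

import Mathlib

open scoped RealInnerProductSpace
open Filter Set Topology

lemma convex_gradient_ineq {E : Type*} [NormedAddCommGroup E] [InnerProductSpace ℝ E]
    [CompleteSpace E]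
    {f : E → ℝ} (hf : ConvexOn ℝ Set.univ f) {x v : E} (h : HasGradientAt f v x) (z : E) :
    f x + ⟪v, z - x⟫ ≤ f z := by
  set w := z - x with hw
  have hline : HasDerivAt (fun t : ℝ => x + t • w) w 0 := by
    simpa using (((hasDerivAt_id (0:ℝ)).smul_const w).const_add x)
  have hcomp : HasDerivAt (fun t : ℝ => f (x + t • w)) ⟪v, w⟫ 0 := by
    have h0 : x = (fun t : ℝ => x + t • w) 0 := by simp
    have hF : HasFDerivAt f (InnerProductSpace.toDual ℝ E v) ((fun t : ℝ => x + t • w) 0) :=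
      h0 ▸ h.hasFDerivAt
    simpa [InnerProductSpace.toDual_apply_apply, Function.comp_def] using hF.comp_hasDerivAt 0 hline
  have hslope : Tendsto (slope (fun t : ℝ => f (x + t • w)) 0) (𝓝[>] (0:ℝ)) (𝓝 ⟪v, w⟫) :=
    (hasDerivAt_iff_tendsto_slope.1 hcomp).mono_left
      (nhdsWithin_mono _ (fun t ht => ne_of_gt ht))
  have hbound : ∀ᶠ t in 𝓝[>] (0:ℝ), slope (fun t : ℝ => f (x + t • w)) 0 t ≤ f z - f x := by
    filter_upwards [Ioc_mem_nhdsGT_of_mem (by simp : (0:ℝ) ∈ Ico (0:ℝ) 1)] with t ht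
    have ht0 : 0 < t := ht.1
    have hconv := hf.2 (mem_univ x) (mem_univ z) (by linarith [ht.2] : (0:ℝ) ≤ 1 - t)
      (le_of_lt ht0) (by ring)
    have heq : (1 - t) • x + t • z = x + t • w := by
      rw [hw]; module
    rw [heq] at hconv
    simp only [smul_eq_mul] at hconv
    have hle : f (x + t • w) - f x ≤ t * (f z - f x) := by nlinarith
    rw [slope_def_field]
    simp only [zero_smul, add_zero, sub_zero]
    rw [div_le_iff₀ ht0]
    linarith
  have := le_of_tendsto hslope hbound
  have hinner : ⟪v, z - x⟫ = ⟪v, w⟫ := by rw [hw]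
  linarith [this]

lemma prox_subgrad {E : Type*} [NormedAddCommGroup E] [InnerProductSpace ℝ E]
    {g : E → ℝ} (hg : ConvexOn ℝ Set.univ g) {x xp a : E} {c : ℝ} (hc : 0 ≤ c)
    (hmin : ∀ ξ : E, ⟪xp - x, a⟫ + (c/2) * ‖xp - x‖^2 + g xp
      ≤ ⟪ξ - x, a⟫ + (c/2) * ‖ξ - x‖^2 + g ξ)
    (ξ : E) : g xp + ⟪-a - c • (xp - x), ξ - xp⟫ ≤ g ξ := by
  set Δ := xp - x with hΔ
  set w := ξ - xp with hwdef
  have key : ∀ t : ℝ, t ∈ Set.Ioc (0:ℝ) 1 →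
      0 ≤ (⟪w, a⟫ + c * ⟪Δ, w⟫ + g ξ - g xp) + t * ((c/2) * ‖w‖^2) := by
    intro t ht
    have ht0 : 0 < t := ht.1
    have h1 := hmin (xp + t • w)
    have hgc : g (xp + t • w) ≤ (1-t) * g xp + t * g ξ := by
      have := hg.2 (Set.mem_univ xp) (Set.mem_univ ξ) (by linarith [ht.2] : (0:ℝ) ≤ 1 - t)
        ht0.le (by ring)
      have heq : (1-t) • xp + t • ξ = xp + t • w := by rw [hwdef]; module
      rw [heq] at this; simpa using this
    have hxeq : xp + t • w - x = Δ + t • w := by rw [hΔ]; module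
    rw [hxeq] at h1
    have hnorm : ‖Δ + t • w‖^2 = ‖Δ‖^2 + 2 * (t * ⟪Δ, w⟫) + t^2 * ‖w‖^2 := by
      rw [norm_add_sq_real, real_inner_smul_right, norm_smul]
      simp [abs_of_pos ht0, mul_pow]
    have hinner : ⟪Δ + t • w, a⟫ = ⟪Δ, a⟫ + t * ⟪w, a⟫ := by
      rw [inner_add_left, real_inner_smul_left]
    rw [hnorm, hinner] at h1
    have h2 : 0 ≤ t * (⟪w, a⟫ + c * ⟪Δ, w⟫ + g ξ - g xp) + t^2 * ((c/2) * ‖w‖^2) := by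
      nlinarith
    nlinarith
  have hB : 0 ≤ (c/2) * ‖w‖^2 := by positivity
  set A := ⟪w, a⟫ + c * ⟪Δ, w⟫ + g ξ - g xp with hA
  set B := (c/2) * ‖w‖^2 with hB'
  have hA0 : 0 ≤ A := by
    by_contra hneg
    push_neg at hneg
    have ht : min 1 (-A/(B+1)) ∈ Set.Ioc (0:ℝ) 1 := by
      constructor
      · exact lt_min one_pos (div_pos (by linarith) (by linarith))
      · exact min_le_left _ _
    have := key _ ht
    have h1 : min 1 (-A/(B+1)) * B ≤ (-A/(B+1)) * B :=
      mul_le_mul_of_nonneg_right (min_le_right _ _) hB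
    have h2 : (-A/(B+1)) * B < -A := by
      rw [div_mul_eq_mul_div, div_lt_iff₀ (by linarith)]
      nlinarith
    linarith
  have hfin : ⟪-a - c • Δ, ξ - xp⟫ = -(⟪w, a⟫ + c * ⟪Δ, w⟫) := by
    rw [← hwdef, inner_sub_left, inner_neg_left, real_inner_smul_left, real_inner_comm a w]
    ring
  rw [hfin]
  simp only [hA] at hA0
  linarith

section Block
variable {p : ℕ} {d : Fin p → ℕ}

local notation "E" => PiLp 2 (fun j : Fin p => EuclideanSpace ℝ (Fin (d j)))

def eupdate (x : E) (j : Fin p) (a : EuclideanSpace ℝ (Fin (d j))) : E :=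
  WithLp.toLp 2 (Function.update x j a)

def esingle (j : Fin p) (c : EuclideanSpace ℝ (Fin (d j))) : E :=
  WithLp.toLp 2 (Function.update (0 : E) j c)

lemma single_apply (j : Fin p) (c : EuclideanSpace ℝ (Fin (d j))) (i : Fin p) :
    (esingle j c) i = if h : i = j then h ▸ c else 0 := by
  by_cases h : i = j
  · subst h; simp [esingle]
  · simp [esingle, Function.update_of_ne h, h]

lemma inner_single (j : Fin p) (c : EuclideanSpace ℝ (Fin (d j))) (z : E) :
    ⟪z, esingle j c⟫ = ⟪z j, c⟫ := by
  rw [PiLp.inner_apply]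
  rw [Finset.sum_eq_single j]
  · simp [esingle]
  · intro i _ hij
    rw [single_apply]
    simp [hij]
  · simp

lemma norm_single (j : Fin p) (c : EuclideanSpace ℝ (Fin (d j))) :
    ‖esingle j c‖ = ‖c‖ := by
  have h1 : ‖esingle j c‖^2 = ‖c‖^2 := by
    have hs := PiLp.norm_sq_eq_of_L2 (fun j : Fin p => EuclideanSpace ℝ (Fin (d j)))
      (WithLp.toLp 2 (Function.update (0 : E) j c))
    refine hs.trans ?_
    rw [Finset.sum_eq_single j]
    · simp
    · intro i _ hij
      simp [esingle, Function.update_of_ne hij]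
    · simp
  calc ‖esingle j c‖ = Real.sqrt (‖esingle j c‖^2) :=
        (Real.sqrt_sq (norm_nonneg _)).symm
    _ = Real.sqrt (‖c‖^2) := by rw [h1]
    _ = ‖c‖ := Real.sqrt_sq (norm_nonneg _)

lemma update_as_add (x : E) (j : Fin p) (a : EuclideanSpace ℝ (Fin (d j)))
    (t : ℝ) (c : EuclideanSpace ℝ (Fin (d j))) :
    eupdate x j a + t • esingle j c
      = eupdate x j (a + t • c) := by
  refine PiLp.ext fun i => ?_
  by_cases h : i = j
  · subst h; simp [esingle, eupdate, PiLp.add_apply, PiLp.smul_apply]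
  · simp [esingle, eupdate, PiLp.add_apply, PiLp.smul_apply, Function.update_of_ne h]

lemma block_descent
    (f : E → ℝ) (Df : E → E) (hDf : ∀ x, HasGradientAt f (Df x) x)
    (j : Fin p) (Lj : ℝ) (hLj : 0 ≤ Lj)
    (hLip : ∀ (x : E) (a b : EuclideanSpace ℝ (Fin (d j))),
      ‖Df (eupdate x j a) j - Df (eupdate x j b) j‖ ≤ Lj * ‖a - b‖)
    (x : E) (a b : EuclideanSpace ℝ (Fin (d j))) :
    f (eupdate x j b) ≤ f (eupdate x j a)
      + ⟪Df (eupdate x j a) j, b - a⟫ + (Lj/2) * ‖b - a‖^2 := by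
  set y : E := eupdate x j a with hy
  set w : E := esingle j (b - a) with hw
  have hψ : ∀ t : ℝ, HasDerivAt (fun s : ℝ => f (y + s • w)) ⟪Df (y + t • w), w⟫ t := by
    intro t
    have hline : HasDerivAt (fun s : ℝ => y + s • w) w t := by
      simpa using (((hasDerivAt_id t).smul_const w).const_add y)
    have hF : HasFDerivAt f (InnerProductSpace.toDual ℝ _ (Df (y + t • w)))
        ((fun s : ℝ => y + s • w) t) := (hDf _).hasFDerivAt
    simpa [InnerProductSpace.toDual_apply_apply, Function.comp_def] using hF.comp_hasDerivAt t hline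
  set ψ : ℝ → ℝ := fun s => f (y + s • w) with hψdef
  set χ : ℝ → ℝ := fun s => ψ s - ψ 0 - s * ⟪Df y, w⟫ - (Lj/2) * ‖b - a‖^2 * s^2 with hχ
  have hχderiv : ∀ t : ℝ, HasDerivAt χ
      (⟪Df (y + t • w), w⟫ - ⟪Df y, w⟫ - Lj * ‖b - a‖^2 * t) t := by
    intro t
    have h1 := (hψ t).sub_const (ψ 0)
    have h2 : HasDerivAt (fun s : ℝ => s * ⟪Df y, w⟫) (⟪Df y, w⟫ : ℝ) t := by
      simpa only [one_mul] using (hasDerivAt_id' t).mul_const (⟪Df y, w⟫ : ℝ)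
    have h3 : HasDerivAt (fun s : ℝ => (Lj/2) * ‖b - a‖^2 * s^2)
        ((Lj/2) * ‖b - a‖^2 * (2 * t)) t := by
      have := (hasDerivAt_pow 2 t).const_mul ((Lj/2) * ‖b - a‖^2)
      refine this.congr_deriv ?_
      push_cast
      ring
    have hfull := (h1.sub h2).sub h3
    refine hfull.congr_deriv ?_
    ring
  have hnonpos : ∀ t ∈ interior (Set.Icc (0:ℝ) 1), deriv χ t ≤ 0 := by
    intro t ht
    rw [interior_Icc] at ht
    rw [(hχderiv t).deriv]
    have hinner1 : ⟪Df (y + t • w), w⟫ - ⟪Df y, w⟫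
        = ⟪Df (y + t • w) j - Df y j, b - a⟫ := by
      rw [inner_single, inner_single, ← inner_sub_left]
    rw [hinner1]
    have hupd : y + t • w = eupdate x j (a + t • (b - a)) := update_as_add x j a t (b-a)
    rw [hupd]
    have hkey : ⟪Df (eupdate x j (a + t • (b-a))) j - Df y j, b - a⟫
        ≤ Lj * ‖b - a‖^2 * t := by
      calc ⟪Df (eupdate x j (a + t • (b-a))) j - Df y j, b - a⟫
          ≤ ‖Df (eupdate x j (a + t • (b-a))) j - Df y j‖ * ‖b - a‖ :=
            real_inner_le_norm _ _
        _ ≤ (Lj * ‖a + t • (b-a) - a‖) * ‖b - a‖ := by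
            apply mul_le_mul_of_nonneg_right _ (norm_nonneg _)
            rw [hy]
            exact hLip x (a + t • (b - a)) a
        _ = Lj * ‖b - a‖^2 * t := by
            have heq : a + t • (b-a) - a = t • (b - a) := by module
            rw [heq, norm_smul]
            simp only [Real.norm_eq_abs, abs_of_pos ht.1]
            ring
    linarith
  have hanti : AntitoneOn χ (Set.Icc (0:ℝ) 1) := by
    apply antitoneOn_of_deriv_nonpos (convex_Icc 0 1)
    · exact fun t _ => ((hχderiv t).continuousAt).continuousWithinAt
    · exact fun t _ => ((hχderiv t).differentiableAt).differentiableWithinAt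
    · exact hnonpos
  have h01 := hanti (Set.mem_Icc.2 ⟨le_refl 0, zero_le_one⟩)
    (Set.mem_Icc.2 ⟨zero_le_one, le_refl 1⟩) zero_le_one
  have hχ0 : χ 0 = 0 := by simp [hχ, hψdef]
  have hχ1 : χ 1 = f (eupdate x j b) - f y - ⟪Df y, w⟫ - (Lj/2) * ‖b - a‖^2 := by
    simp only [hχ, hψdef, one_smul, one_pow, mul_one]
    have : y + w = eupdate x j b := by
      have := update_as_add x j a 1 (b - a)
      simpa using this
    rw [this]
    have hy0 : y + (0:ℝ) • w = y := by simp
    rw [hy0]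
    ring
  rw [hχ0, hχ1] at h01
  have hDfw : ⟪Df y, w⟫ = ⟪Df y j, b - a⟫ := inner_single j (b-a) (Df y)
  rw [hDfw] at h01
  linarith

def mixv (x0 x1 : E) (k : ℕ) : E := WithLp.toLp 2 (fun i => if (i : ℕ) < k then x1 i else x0 i)

lemma mixv_zero (x0 x1 : E) : mixv x0 x1 0 = x0 := by refine PiLp.ext fun i => ?_; simp [mixv]

lemma mixv_top (x0 x1 : E) : mixv x0 x1 p = x1 := by refine PiLp.ext fun i => ?_; simp [mixv, i.isLt]

lemma telescope
    (f : E → ℝ) (Df : E → E) (hDf : ∀ x, HasGradientAt f (Df x) x)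
    (Lc : Fin p → ℝ) (hLc : ∀ j, 0 ≤ Lc j)
    (hpartialLip : ∀ (j : Fin p) (x : E) (a b : EuclideanSpace ℝ (Fin (d j))),
      ‖Df (eupdate x j a) j - Df (eupdate x j b) j‖ ≤ Lc j * ‖a - b‖)
    (x0 x1 : E) :
    f x1 ≤ f x0 + ∑ j : Fin p,
      (⟪Df (mixv x0 x1 j) j, x1 j - x0 j⟫ + (Lc j/2) * ‖x1 j - x0 j‖^2) := by
  set T : Fin p → ℝ := fun j =>
    ⟪Df (mixv x0 x1 j) j, x1 j - x0 j⟫ + (Lc j/2) * ‖x1 j - x0 j‖^2 with hT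
  have htel : ∀ k : ℕ, k ≤ p →
      f (mixv x0 x1 k) ≤ f x0 + ∑ j : Fin p, (if (j : ℕ) < k then T j else 0) := by
    intro k
    induction k with
    | zero => intro _; simp [mixv_zero]
    | succ k ih =>
      intro hk1
      have hk : k < p := hk1
      have ihk := ih hk.le
      set j : Fin p := ⟨k, hk⟩ with hj
      have hYk1 : mixv x0 x1 (k+1) = eupdate (mixv x0 x1 k) j (x1 j) := by
        refine PiLp.ext fun i => ?_
        by_cases h : i = j
        · subst h
          simp [mixv, eupdate, hj]
        · simp only [eupdate, PiLp.toLp_apply, Function.update_of_ne h]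
          have hne : (i : ℕ) ≠ k := fun hc => h (Fin.ext (by simp [hj, hc]))
          show (if (i:ℕ) < k + 1 then x1 i else x0 i) = (if (i:ℕ) < k then x1 i else x0 i)
          by_cases h2 : (i : ℕ) < k
          · simp [h2, Nat.lt_succ_of_lt h2]
          · have h3 : ¬ ((i : ℕ) < k + 1) := by omega
            simp [h2, h3]
      have hYkup : mixv x0 x1 k = eupdate (mixv x0 x1 k) j (x0 j) := by
        refine PiLp.ext fun i => ?_
        by_cases h : i = j
        · rw [h]; simp only [eupdate, PiLp.toLp_apply, Function.update_self]
          show (if ((j:Fin p):ℕ) < k then x1 j else x0 j) = x0 j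
          simp [hj]
        · simp only [eupdate, PiLp.toLp_apply, Function.update_of_ne h]
      have hbd := block_descent f Df hDf j (Lc j) (hLc j)
        (hpartialLip j) (mixv x0 x1 k) (x0 j) (x1 j)
      rw [← hYk1, ← hYkup] at hbd
      have hsum : ∑ j' : Fin p, (if (j' : ℕ) < k + 1 then T j' else 0)
          = (∑ j' : Fin p, (if (j' : ℕ) < k then T j' else 0)) + T j := by
        have hterm : ∀ j' : Fin p, (if (j' : ℕ) < k + 1 then T j' else 0)
            = (if (j' : ℕ) < k then T j' else 0) + (if j' = j then T j' else 0) := by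
          intro j'
          by_cases h : j' = j
          · subst h; simp [hj]
          · have hne : (j' : ℕ) ≠ k := fun hc => h (Fin.ext (by simp [hj, hc]))
            by_cases h2 : (j' : ℕ) < k
            · simp [h, h2, Nat.lt_succ_of_lt h2]
            · have h3 : ¬ ((j' : ℕ) < k + 1) := by omega
              simp [h, h2, h3]
        rw [Finset.sum_congr rfl (fun j' _ => hterm j'), Finset.sum_add_distrib,
          Finset.sum_ite_eq' Finset.univ j T]
        simp
      rw [hsum]
      have hTj : T j = ⟪Df (mixv x0 x1 k) j, x1 j - x0 j⟫
          + (Lc j/2) * ‖x1 j - x0 j‖^2 := rfl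
      rw [hTj]
      linarith [hbd, ihk]
  have := htel p le_rfl
  rw [mixv_top] at this
  calc f x1 ≤ f x0 + ∑ j : Fin p, (if (j : ℕ) < p then T j else 0) := this
    _ = f x0 + ∑ j : Fin p, T j := by
        congr 1
        exact Finset.sum_congr rfl (fun j _ => by simp [j.isLt])

lemma coord_norm_le (z : E) (j : Fin p) : ‖z j‖ ≤ ‖z‖ := by
  have h1 : ‖z j‖^2 ≤ ‖z‖^2 := by
    rw [PiLp.norm_sq_eq_of_L2 (fun j : Fin p => EuclideanSpace ℝ (Fin (d j))) z]
    exact Finset.single_le_sum (f := fun i => ‖z i‖^2) (fun i _ => by positivity)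
      (Finset.mem_univ j)
  calc ‖z j‖ = Real.sqrt (‖z j‖^2) := (Real.sqrt_sq (norm_nonneg _)).symm
    _ ≤ Real.sqrt (‖z‖^2) := Real.sqrt_le_sqrt h1
    _ = ‖z‖ := Real.sqrt_sq (norm_nonneg _)

end Block
set_option maxHeartbeats 2000000 in
theorem stmt16 {p : ℕ} [NeZero p] {d : Fin p → ℕ}
    (f : PiLp 2 (fun j : Fin p => EuclideanSpace ℝ (Fin (d j))) → ℝ)
    (Df : PiLp 2 (fun j : Fin p => EuclideanSpace ℝ (Fin (d j))) →
      PiLp 2 (fun j : Fin p => EuclideanSpace ℝ (Fin (d j))))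
    (hDf : ∀ x, HasGradientAt f (Df x) x)
    (hfconv : ConvexOn ℝ Set.univ f)
    (L : ℝ) (hL : 0 < L)
    (hLip : ∀ x y, ‖Df x - Df y‖ ≤ L * ‖x - y‖)
    (g : (j : Fin p) → EuclideanSpace ℝ (Fin (d j)) → ℝ)
    (hgconv : ∀ j, ConvexOn ℝ Set.univ (g j))
    (hglsc : ∀ j, LowerSemicontinuous (g j))
    (Lc : Fin p → ℝ) (hLc : ∀ j, 0 < Lc j)
    (hpartialLip : ∀ (j : Fin p) (x : PiLp 2 (fun j : Fin p => EuclideanSpace ℝ (Fin (d j))))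
      (a b : EuclideanSpace ℝ (Fin (d j))),
      ‖Df (WithLp.toLp 2 (Function.update x j a)) j - Df (WithLp.toLp 2 (Function.update x j b)) j‖ ≤ Lc j * ‖a - b‖)
    (m : ℝ) (hm : ∀ x, m ≤ f x + ∑ j, g j (x j)) (hach : ∃ x, f x + ∑ j, g j (x j) = m)
    (Ω : Set (PiLp 2 (fun j : Fin p => EuclideanSpace ℝ (Fin (d j)))))
    (η : ℝ) (hη : 0 < η)
    (hEB : ∀ x ∈ Ω, ∀ v : PiLp 2 (fun j : Fin p => EuclideanSpace ℝ (Fin (d j))),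
      (∀ z, (f x + ∑ j, g j (x j)) + ⟪v, z - x⟫ ≤ f z + ∑ j, g j (z j)) →
      η * Real.sqrt ((f x + ∑ j, g j (x j)) - m) ≤ ‖v‖)
    (X : ℕ → PiLp 2 (fun j : Fin p => EuclideanSpace ℝ (Fin (d j))))
    (hXΩ : ∀ t, X t ∈ Ω)
    (H : ℕ → Fin p → PiLp 2 (fun j : Fin p => EuclideanSpace ℝ (Fin (d j))))
    (hH : ∀ t (j i : Fin p),
      H t j i = if (i : ℕ) < (j : ℕ) then X (t+1) i else X t i)
    (hupdate : ∀ t (j : Fin p), ∀ ξ : EuclideanSpace ℝ (Fin (d j)),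
      ⟪X (t+1) j - X t j, Df (H t j) j⟫ + (Lc j / 2) * ‖X (t+1) j - X t j‖^2
          + g j (X (t+1) j)
        ≤ ⟪ξ - X t j, Df (H t j) j⟫ + (Lc j / 2) * ‖ξ - X t j‖^2 + g j ξ) :
    ∀ t, (f (X (t+1)) + ∑ j, g j (X (t+1) j)) - m
      ≤ (η^2 * (Finset.univ.inf' Finset.univ_nonempty Lc)
            / (4*p*L^2 + 4*(Finset.univ.sup' Finset.univ_nonempty Lc)^2) + 1)⁻¹
          * ((f (X t) + ∑ j, g j (X t j)) - m) := by
  classical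
  intro t
  set Lmin := Finset.univ.inf' Finset.univ_nonempty Lc with hLmin
  set Lmax := Finset.univ.sup' Finset.univ_nonempty Lc with hLmax
  obtain ⟨j0, -, hj0⟩ := Finset.exists_mem_eq_inf' (Finset.univ_nonempty) Lc
  obtain ⟨j1, -, hj1⟩ := Finset.exists_mem_eq_sup' (Finset.univ_nonempty) Lc
  have hLminpos : 0 < Lmin := by rw [hLmin, hj0]; exact hLc j0
  have hLmaxpos : 0 < Lmax := by rw [hLmax, hj1]; exact hLc j1
  have hLminle : ∀ j, Lmin ≤ Lc j := fun j => Finset.inf'_le _ (Finset.mem_univ j)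
  have hLmaxge : ∀ j, Lc j ≤ Lmax := fun j => Finset.le_sup' _ (Finset.mem_univ j)
  clear_value Lmin Lmax
  set x0 := X t with hx0
  set x1 := X (t+1) with hx1
  set Δ : (j : Fin p) → EuclideanSpace ℝ (Fin (d j)) := fun j => x1 j - x0 j with hΔ
  set a : (j : Fin p) → EuclideanSpace ℝ (Fin (d j)) := fun j => Df (H t j) j with ha
  set u : (j : Fin p) → EuclideanSpace ℝ (Fin (d j)) :=
    fun j => -(a j) - Lc j • Δ j with hu
  set S : ℝ := ∑ j, ‖Δ j‖^2 with hS
  have hSnn : 0 ≤ S := by rw [hS]; positivity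
  clear_value S
  -- subgradient inequalities for g
  have hsub : ∀ (j : Fin p) (ξ : EuclideanSpace ℝ (Fin (d j))),
      g j (x1 j) + ⟪u j, ξ - x1 j⟫ ≤ g j ξ := by
    intro j ξ
    exact prox_subgrad (hgconv j) (hLc j).le (hupdate t j) ξ
  -- identify H with mixv
  have hHmix : ∀ j : Fin p, H t j = mixv x0 x1 (j : ℕ) := by
    intro j; refine PiLp.ext fun i => ?_; rw [hH t j i]; rfl
  -- telescoping f bound
  have hftel : f x1 ≤ f x0 + ∑ j : Fin p, (⟪a j, Δ j⟫ + (Lc j / 2) * ‖Δ j‖^2) := by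
    have := telescope f Df hDf Lc (fun j => (hLc j).le)
      (fun j x c b => hpartialLip j x c b) x0 x1
    refine this.trans (le_of_eq ?_)
    congr 1
    refine Finset.sum_congr rfl (fun j _ => ?_)
    rw [ha]
    simp only [hΔ]
    rw [← hHmix j]
  -- g descent
  have hgdesc : ∀ j : Fin p, g j (x1 j) + ⟪a j, Δ j⟫ + Lc j * ‖Δ j‖^2 ≤ g j (x0 j) := by
    intro j
    have h1 := hsub j (x0 j)
    have hinn : ⟪u j, x0 j - x1 j⟫ = ⟪a j, Δ j⟫ + Lc j * ‖Δ j‖^2 := by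
      have hd : x0 j - x1 j = -(Δ j) := by rw [hΔ]; module
      rw [hd, hu]
      simp only [inner_neg_right, inner_sub_left, inner_neg_left, real_inner_smul_left]
      rw [real_inner_self_eq_norm_sq]
      ring
    rw [hinn] at h1
    linarith
  -- total descent
  have hdesc : (Lmin / 2) * S ≤ (f x0 + ∑ j, g j (x0 j)) - (f x1 + ∑ j, g j (x1 j)) := by
    have hsumg : ∑ j, (g j (x1 j) + ⟪a j, Δ j⟫ + Lc j * ‖Δ j‖^2) ≤ ∑ j, g j (x0 j) :=
      Finset.sum_le_sum (fun j _ => hgdesc j)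
    rw [Finset.sum_add_distrib, Finset.sum_add_distrib] at hsumg
    rw [Finset.sum_add_distrib] at hftel
    have hhalf : (Lmin / 2) * S ≤ ∑ j, Lc j * ‖Δ j‖^2 - ∑ j, (Lc j / 2) * ‖Δ j‖^2 := by
      rw [← Finset.sum_sub_distrib]
      rw [hS, Finset.mul_sum]
      refine Finset.sum_le_sum (fun j _ => ?_)
      have := hLminle j
      nlinarith [sq_nonneg ‖Δ j‖]
    linarith
  -- the subgradient vector
  set v : PiLp 2 (fun j : Fin p => EuclideanSpace ℝ (Fin (d j))) :=
    WithLp.toLp 2 (fun j => Df x1 j + u j) with hv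
  have hvj : ∀ j : Fin p, v j = Df x1 j + u j := fun j => rfl
  -- v is a subgradient of φ at x1
  have hvsub : ∀ z, (f x1 + ∑ j, g j (x1 j)) + ⟪v, z - x1⟫ ≤ f z + ∑ j, g j (z j) := by
    intro z
    have hf := convex_gradient_ineq hfconv (hDf x1) z
    have hg : ∀ j : Fin p, g j (x1 j) + ⟪u j, z j - x1 j⟫ ≤ g j (z j) := fun j => hsub j (z j)
    have hsumγ : ∑ j, (g j (x1 j) + ⟪u j, z j - x1 j⟫) ≤ ∑ j, g j (z j) :=
      Finset.sum_le_sum (fun j _ => hg j)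
    rw [Finset.sum_add_distrib] at hsumγ
    have hip : ⟪v, z - x1⟫ = ⟪Df x1, z - x1⟫ + ∑ j, ⟪u j, z j - x1 j⟫ := by
      rw [PiLp.inner_apply, PiLp.inner_apply]
      rw [← Finset.sum_add_distrib]
      refine Finset.sum_congr rfl (fun j _ => ?_)
      have h1 : (z - x1) j = z j - x1 j := rfl
      have h2 : v j = Df x1 j + u j := rfl
      rw [h1, h2, inner_add_left]
    rw [hip]
    linarith
  -- error bound
  have hEB1 := hEB x1 (hXΩ (t+1)) v hvsub
  -- norm bound on v
  have hvnorm : ‖v‖^2 ≤ (2 * p * L^2 + 2 * Lmax^2) * S := by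
    have hcoord : ∀ j : Fin p, ‖v j‖^2 ≤ 2 * L^2 * S + 2 * Lmax^2 * ‖Δ j‖^2 := by
      intro j
      have hvj2 : v j = (Df x1 j - a j) + (- (Lc j • Δ j)) := by
        rw [hvj j, hu]; module
      have h1 : ‖v j‖ ≤ ‖Df x1 j - a j‖ + Lc j * ‖Δ j‖ := by
        rw [hvj2]
        refine (norm_add_le _ _).trans ?_
        rw [norm_neg, norm_smul]
        simp only [Real.norm_eq_abs, abs_of_pos (hLc j)]
        exact le_refl _
      have h2 : ‖Df x1 j - a j‖ ≤ L * Real.sqrt S := by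
        have hc : ‖Df x1 j - a j‖ ≤ ‖Df x1 - Df (H t j)‖ := by
          have : Df x1 j - a j = (Df x1 - Df (H t j)) j := by rw [ha]; rfl
          rw [this]
          exact coord_norm_le _ j
        refine hc.trans ((hLip x1 (H t j)).trans ?_)
        refine mul_le_mul_of_nonneg_left ?_ hL.le
        have hns : ‖x1 - H t j‖^2 ≤ S := by
          have hh := PiLp.norm_sq_eq_of_L2 (fun j : Fin p => EuclideanSpace ℝ (Fin (d j)))
            (x1 - H t j)
          rw [hh, hS]
          refine Finset.sum_le_sum (fun i _ => ?_)
          have hcoords : (x1 - H t j) i = x1 i - H t j i := rfl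
          rw [hcoords, hH t j i]
          by_cases hij : (i : ℕ) < (j : ℕ)
          · rw [if_pos hij, ← hx1, sub_self]
            simpa using sq_nonneg ‖Δ i‖
          · rw [if_neg hij, ← hx0]
        calc ‖x1 - H t j‖ = Real.sqrt (‖x1 - H t j‖^2) := (Real.sqrt_sq (norm_nonneg _)).symm
          _ ≤ Real.sqrt S := Real.sqrt_le_sqrt hns
      have hsqrtS : Real.sqrt S ^ 2 = S := Real.sq_sqrt hSnn
      have h3 : ‖v j‖^2 ≤ (L * Real.sqrt S + Lc j * ‖Δ j‖)^2 := by
        have h4 : ‖v j‖ ≤ L * Real.sqrt S + Lc j * ‖Δ j‖ := by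
          linarith [h1, h2]
        nlinarith [norm_nonneg (v j), h4, mul_nonneg (hLc j).le (norm_nonneg (Δ j)),
          mul_nonneg hL.le (Real.sqrt_nonneg S)]
      refine h3.trans ?_
      have hLcj : Lc j ≤ Lmax := hLmaxge j
      have hd1 : Lc j * ‖Δ j‖ ≤ Lmax * ‖Δ j‖ :=
        mul_le_mul_of_nonneg_right hLcj (norm_nonneg _)
      have hd2 : 0 ≤ L * Real.sqrt S := mul_nonneg hL.le (Real.sqrt_nonneg S)
      have hd3 : Lc j * Lc j ≤ Lmax * Lmax := mul_self_le_mul_self (hLc j).le hLcj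
      have hd4 := mul_le_mul_of_nonneg_left hd1 hd2
      have hd5 := mul_le_mul_of_nonneg_right hd3 (sq_nonneg ‖Δ j‖)
      nlinarith [hsqrtS, hd4, hd5, sq_nonneg (L * Real.sqrt S - Lmax * ‖Δ j‖),
        mul_nonneg (hLc j).le (norm_nonneg (Δ j))]
    have hvn := PiLp.norm_sq_eq_of_L2 (fun j : Fin p => EuclideanSpace ℝ (Fin (d j))) v
    rw [hvn]
    calc ∑ j, ‖v j‖^2 ≤ ∑ j : Fin p, (2 * L^2 * S + 2 * Lmax^2 * ‖Δ j‖^2) :=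
          Finset.sum_le_sum (fun j _ => hcoord j)
      _ = (p : ℝ) * (2 * L^2 * S) + 2 * Lmax^2 * S := by
          rw [Finset.sum_add_distrib, Finset.sum_const, ← Finset.mul_sum]
          simp [hS]
      _ = (2 * p * L^2 + 2 * Lmax^2) * S := by ring
  -- final algebra
  set A := (f x1 + ∑ j, g j (x1 j)) - m with hA
  set B := (f x0 + ∑ j, g j (x0 j)) - m with hB
  clear_value A B
  have hA0 : 0 ≤ A := by rw [hA]; linarith [hm x1]
  have hsq : η^2 * A ≤ ‖v‖^2 := by
    have hnn : 0 ≤ η * Real.sqrt A := by positivity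
    have hmm := mul_self_le_mul_self hnn hEB1
    have hexp : (η * Real.sqrt A) * (η * Real.sqrt A) = η^2 * A := by
      have h := Real.mul_self_sqrt hA0
      linear_combination η^2 * h
    calc η^2 * A = (η * Real.sqrt A) * (η * Real.sqrt A) := hexp.symm
      _ ≤ ‖v‖ * ‖v‖ := hmm
      _ = ‖v‖^2 := (sq ‖v‖).symm
  have hBA : (Lmin / 2) * S ≤ B - A := by rw [hA, hB]; linarith [hdesc]
  set C := 4 * (p:ℝ) * L^2 + 4 * Lmax^2 with hC
  have hCpos : 0 < C := by
    have hp1 : 1 ≤ (p : ℝ) := by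
      have := Nat.one_le_iff_ne_zero.2 (NeZero.ne p)
      exact_mod_cast this
    rw [hC]; nlinarith [sq_nonneg L, hLmaxpos]
  have hkey : η^2 * Lmin * A ≤ C * (B - A) := by
    have h5 : η^2 * A ≤ (2 * p * L^2 + 2 * Lmax^2) * S := le_trans hsq hvnorm
    have h6 : Lmin * ((2 * p * L^2 + 2 * Lmax^2) * S) ≤ (2 * p * L^2 + 2 * Lmax^2) * (2 * (B - A)) := by
      have hfac : 0 ≤ 2 * (p:ℝ) * L^2 + 2 * Lmax^2 := by positivity
      have := mul_le_mul_of_nonneg_left (by linarith [hBA] : Lmin * S ≤ 2 * (B - A)) hfac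
      nlinarith [this]
    have h7 : Lmin * (η^2 * A) ≤ Lmin * ((2 * p * L^2 + 2 * Lmax^2) * S) :=
      mul_le_mul_of_nonneg_left h5 hLminpos.le
    rw [hC]
    nlinarith [h6, h7]
  -- conclude
  have hgoal : A ≤ (η^2 * Lmin / C + 1)⁻¹ * B := by
    have hkpos : 0 < η^2 * Lmin / C + 1 := by positivity
    rw [← sub_nonneg]
    have h8 : (η^2 * Lmin / C + 1)⁻¹ * B - A
        = ((η^2 * Lmin / C + 1)⁻¹ / C) * (C * B - (η^2 * Lmin + C) * A) := by
      field_simp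
    rw [h8]
    have h9 : 0 ≤ C * B - (η^2 * Lmin + C) * A := by nlinarith [hkey]
    positivity
  exact hgoal
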